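/- Let (a_{ij}) (1 ≤ i ≤ v, 1 ≤ j ≤ w) be a matrix of nonnegative reals, with row sums a_{i*}, column sums a_{*j}, and total sum e. Let ρ, γ ≥ 0 be such that a_{i*} ≥ 2ρ for all i and a_{*j} ≥ 2γ for all j. Then Σ_{i,j} a_{ij}(a_{i*} - ρ)(a_{*j} - γ) ≥ e(e/v - ρ)(e/w - γ). -/

import Mathlib

/-- Pointwise two-variable inequality: the key to the main theorem. -/
lemma aux_pw (R C ρ γ r c : ℝ) (hρ : 0 ≤ ρ) (hγ : 0 ≤ γ)
    (hr2 : 2 * ρ ≤ r) (hc2 : 2 * γ ≤ c) (hR2 : 2 * ρ ≤ R) (hC2 : 2 * γ ≤ C)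
    (hr0 : 0 < r) (hc0 : 0 < c) :
    0 ≤ (C - γ) * (r - R) ^ 2 * c + ((r - R) * (c - C)) * (r * c)
        + (R - ρ) * (c - C) ^ 2 * r := by
  have hCγ : 0 ≤ C - γ := by linarith
  have hRρ : 0 ≤ R - ρ := by linarith
  have hR0 : 0 ≤ R := by linarith
  have hC0 : 0 ≤ C := by linarith
  have t1 : 0 ≤ (C - γ) * (r - R) ^ 2 * c := by positivity
  have t3 : 0 ≤ (R - ρ) * (c - C) ^ 2 * r := by positivity
  rcases le_total R r with h1 | h1 <;> rcases le_total C c with h2 | h2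
  · -- R ≤ r, C ≤ c : all three terms nonnegative
    have h0 : 0 ≤ (r - R) * (c - C) := mul_nonneg (by linarith) (by linarith)
    have t2 : 0 ≤ ((r - R) * (c - C)) * (r * c) := mul_nonneg h0 (by positivity)
    linarith
  · -- R ≤ r, c ≤ C
    have hQ : 0 ≤ 2 * (R - ρ) * r - R ^ 2 := by
      have p1 : 0 ≤ (R - 2 * ρ) * r := mul_nonneg (by linarith) hr0.le
      have p2 : 0 ≤ R * (r - R) := mul_nonneg hR0 (by linarith)
      have hid : 2 * (R - ρ) * r - R ^ 2 = (R - 2 * ρ) * r + R * (r - R) := by ring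
      linarith
    have hA : 0 ≤ (c * (r - R) - R * (C - c)) ^ 2 := sq_nonneg _
    have hB : 0 ≤ (c - 2 * γ) * c * (r - R) ^ 2 := by
      have : 0 ≤ c - 2 * γ := by linarith
      positivity
    have hC3 : 0 ≤ (2 * (R - ρ) * r - R ^ 2) * (C - c) ^ 2 := mul_nonneg hQ (sq_nonneg _)
    have hid2 : 2 * ((C - γ) * (r - R) ^ 2 * c + ((r - R) * (c - C)) * (r * c)
        + (R - ρ) * (c - C) ^ 2 * r)
        = (c * (r - R) - R * (C - c)) ^ 2 + (c - 2 * γ) * c * (r - R) ^ 2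
          + (2 * (R - ρ) * r - R ^ 2) * (C - c) ^ 2 := by ring
    linarith
  · -- r ≤ R, C ≤ c
    have hQ : 0 ≤ 2 * (C - γ) * c - C ^ 2 := by
      have p1 : 0 ≤ (C - 2 * γ) * c := mul_nonneg (by linarith) hc0.le
      have p2 : 0 ≤ C * (c - C) := mul_nonneg hC0 (by linarith)
      have hid : 2 * (C - γ) * c - C ^ 2 = (C - 2 * γ) * c + C * (c - C) := by ring
      linarith
    have hA : 0 ≤ (C * (R - r) - r * (c - C)) ^ 2 := sq_nonneg _
    have hB : 0 ≤ (2 * (C - γ) * c - C ^ 2) * (R - r) ^ 2 := mul_nonneg hQ (sq_nonneg _)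
    have hC3 : 0 ≤ (r * (r - 2 * ρ)) * (c - C) ^ 2 := by
      have : 0 ≤ r - 2 * ρ := by linarith
      positivity
    have hid2 : 2 * ((C - γ) * (r - R) ^ 2 * c + ((r - R) * (c - C)) * (r * c)
        + (R - ρ) * (c - C) ^ 2 * r)
        = (C * (R - r) - r * (c - C)) ^ 2 + (2 * (C - γ) * c - C ^ 2) * (R - r) ^ 2
          + (r * (r - 2 * ρ)) * (c - C) ^ 2 := by ring
    linarith
  · -- r ≤ R, c ≤ C
    have h0 : 0 ≤ (R - r) * (C - c) := mul_nonneg (by linarith) (by linarith)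
    have t2 : 0 ≤ ((r - R) * (c - C)) * (r * c) := by
      have hq : (r - R) * (c - C) = (R - r) * (C - c) := by ring
      rw [hq]; exact mul_nonneg h0 (by positivity)
    linarith

theorem stmt_9 (v w : ℕ) (hv : 1 ≤ v) (hw : 1 ≤ w)
    (a : Fin v → Fin w → ℝ) (ha : ∀ i j, 0 ≤ a i j)
    (ρ γ : ℝ) (hρ : 0 ≤ ρ) (hγ : 0 ≤ γ)
    (hrow : ∀ i, 2 * ρ ≤ ∑ j, a i j)
    (hcol : ∀ j, 2 * γ ≤ ∑ i, a i j)
    (e : ℝ) (he : e = ∑ i, ∑ j, a i j) :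
    ∑ i, ∑ j, a i j * ((∑ j', a i j') - ρ) * ((∑ i', a i' j) - γ) ≥
      e * (e / v - ρ) * (e / w - γ) := by
  have hv0 : (0:ℝ) < v := by exact_mod_cast Nat.lt_of_lt_of_le Nat.zero_lt_one hv
  have hw0 : (0:ℝ) < w := by exact_mod_cast Nat.lt_of_lt_of_le Nat.zero_lt_one hw
  set R : ℝ := e / v with hRdef
  set C : ℝ := e / w with hCdef
  -- column sums total
  have hsum_c : ∑ j, ∑ i, a i j = e := by rw [Finset.sum_comm]; exact he.symm
  -- averages dominate 2ρ, 2γ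
  have hR2 : 2 * ρ ≤ R := by
    have h1 : ∑ _i : Fin v, (2 * ρ) ≤ ∑ i, ∑ j, a i j :=
      Finset.sum_le_sum fun i _ => hrow i
    rw [Finset.sum_const, Finset.card_univ, Fintype.card_fin, nsmul_eq_mul] at h1
    rw [hRdef, le_div_iff₀ hv0]
    rw [← he] at h1
    linarith
  have hC2 : 2 * γ ≤ C := by
    have h1 : ∑ _j : Fin w, (2 * γ) ≤ ∑ j, ∑ i, a i j :=
      Finset.sum_le_sum fun j _ => hcol j
    rw [Finset.sum_const, Finset.card_univ, Fintype.card_fin, nsmul_eq_mul] at h1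
    rw [hCdef, le_div_iff₀ hw0]
    rw [hsum_c] at h1
    linarith
  have hCγ : 0 ≤ C - γ := by linarith
  have hRρ : 0 ≤ R - ρ := by linarith
  -- centered sums vanish
  have hx_sum : ∑ i, ((∑ j, a i j) - R) = 0 := by
    rw [Finset.sum_sub_distrib, Finset.sum_const, Finset.card_univ, Fintype.card_fin,
      nsmul_eq_mul, ← he, hRdef]
    field_simp
    ring
  have hy_sum : ∑ j, ((∑ i, a i j) - C) = 0 := by
    rw [Finset.sum_sub_distrib, Finset.sum_const, Finset.card_univ, Fintype.card_fin,
      nsmul_eq_mul, hsum_c, hCdef]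
    field_simp
    ring
  -- weighted first moments equal plain sums of squares
  have hXX : (∑ i, ∑ j, a i j * ((∑ j', a i j') - R)) = ∑ i, ((∑ j, a i j) - R) ^ 2 := by
    have h1 : ∀ i : Fin v, (∑ j, a i j * ((∑ j', a i j') - R))
        = ((∑ j, a i j) - R) ^ 2 + R * ((∑ j, a i j) - R) := by
      intro i
      rw [← Finset.sum_mul]
      ring
    rw [Finset.sum_congr rfl fun i _ => h1 i, Finset.sum_add_distrib, ← Finset.mul_sum,
      hx_sum]
    ring
  have hYY : (∑ i, ∑ j, a i j * ((∑ i', a i' j) - C)) = ∑ j, ((∑ i, a i j) - C) ^ 2 := by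
    rw [Finset.sum_comm]
    have h1 : ∀ j : Fin w, (∑ i, a i j * ((∑ i', a i' j) - C))
        = ((∑ i, a i j) - C) ^ 2 + C * ((∑ i, a i j) - C) := by
      intro j
      rw [← Finset.sum_mul]
      ring
    rw [Finset.sum_congr rfl fun j _ => h1 j, Finset.sum_add_distrib, ← Finset.mul_sum,
      hy_sum]
    ring
  -- the weighted Rayleigh-type sums are dominated by the plain sums of squares
  have hX2 : (∑ i, ∑ j, a i j * (((∑ j', a i j') - R) ^ 2 / (∑ j', a i j')))
      ≤ ∑ i, ((∑ j, a i j) - R) ^ 2 := by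
    apply Finset.sum_le_sum
    intro i _
    rw [← Finset.sum_mul]
    rcases eq_or_ne (∑ j, a i j) 0 with h | h
    · rw [h, zero_mul]
      positivity
    · rw [mul_comm, div_mul_cancel₀ _ h]
  have hY2 : (∑ i, ∑ j, a i j * (((∑ i', a i' j) - C) ^ 2 / (∑ i', a i' j)))
      ≤ ∑ j, ((∑ i, a i j) - C) ^ 2 := by
    rw [Finset.sum_comm]
    apply Finset.sum_le_sum
    intro j _
    rw [← Finset.sum_mul]
    rcases eq_or_ne (∑ i, a i j) 0 with h | h
    · rw [h, zero_mul]
      positivity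
    · rw [mul_comm, div_mul_cancel₀ _ h]
  -- pointwise inequality
  have key : ∀ i j, 0 ≤ a i j * (((∑ j', a i j') - R) * ((∑ i', a i' j) - C))
      + (C - γ) * (a i j * (((∑ j', a i j') - R) ^ 2 / (∑ j', a i j')))
      + (R - ρ) * (a i j * (((∑ i', a i' j) - C) ^ 2 / (∑ i', a i' j))) := by
    intro i j
    rcases (ha i j).eq_or_lt with h | h
    · simp [← h]
    · have hra : a i j ≤ ∑ j', a i j' :=
        Finset.single_le_sum (fun j' _ => ha i j') (Finset.mem_univ j)
      have hrc : a i j ≤ ∑ i', a i' j :=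
        Finset.single_le_sum (fun i' _ => ha i' j) (Finset.mem_univ i)
      have hr0 : 0 < ∑ j', a i j' := lt_of_lt_of_le h hra
      have hc0 : 0 < ∑ i', a i' j := lt_of_lt_of_le h hrc
      have main := aux_pw R C ρ γ (∑ j', a i j') (∑ i', a i' j) hρ hγ
        (hrow i) (hcol j) hR2 hC2 hr0 hc0
      have heq : (((∑ j', a i j') - R) * ((∑ i', a i' j) - C))
          + (C - γ) * (((∑ j', a i j') - R) ^ 2 / (∑ j', a i j'))
          + (R - ρ) * (((∑ i', a i' j) - C) ^ 2 / (∑ i', a i' j))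
          = ((C - γ) * ((∑ j', a i j') - R) ^ 2 * (∑ i', a i' j)
            + (((∑ j', a i j') - R) * ((∑ i', a i' j) - C)) * ((∑ j', a i j') * (∑ i', a i' j))
            + (R - ρ) * ((∑ i', a i' j) - C) ^ 2 * (∑ j', a i j'))
            / ((∑ j', a i j') * (∑ i', a i' j)) := by
        field_simp
        ring
      have hbr : 0 ≤ (((∑ j', a i j') - R) * ((∑ i', a i' j) - C))
          + (C - γ) * (((∑ j', a i j') - R) ^ 2 / (∑ j', a i j'))
          + (R - ρ) * (((∑ i', a i' j) - C) ^ 2 / (∑ i', a i' j)) := by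
        rw [heq]
        exact div_nonneg main (by positivity)
      calc (0:ℝ) ≤ a i j * ((((∑ j', a i j') - R) * ((∑ i', a i' j) - C))
          + (C - γ) * (((∑ j', a i j') - R) ^ 2 / (∑ j', a i j'))
          + (R - ρ) * (((∑ i', a i' j) - C) ^ 2 / (∑ i', a i' j))) :=
            mul_nonneg h.le hbr
        _ = a i j * (((∑ j', a i j') - R) * ((∑ i', a i' j) - C))
          + (C - γ) * (a i j * (((∑ j', a i j') - R) ^ 2 / (∑ j', a i j')))
          + (R - ρ) * (a i j * (((∑ i', a i' j) - C) ^ 2 / (∑ i', a i' j))) := by ring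
  -- sum of the pointwise inequality
  have hS : (0:ℝ) ≤ (∑ i, ∑ j, a i j * (((∑ j', a i j') - R) * ((∑ i', a i' j) - C)))
      + (C - γ) * (∑ i, ∑ j, a i j * (((∑ j', a i j') - R) ^ 2 / (∑ j', a i j')))
      + (R - ρ) * (∑ i, ∑ j, a i j * (((∑ i', a i' j) - C) ^ 2 / (∑ i', a i' j))) := by
    have h0 : (0:ℝ) ≤ ∑ i, ∑ j, (a i j * (((∑ j', a i j') - R) * ((∑ i', a i' j) - C))
        + (C - γ) * (a i j * (((∑ j', a i j') - R) ^ 2 / (∑ j', a i j')))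
        + (R - ρ) * (a i j * (((∑ i', a i' j) - C) ^ 2 / (∑ i', a i' j)))) :=
      Finset.sum_nonneg fun i _ => Finset.sum_nonneg fun j _ => key i j
    have hdist : (∑ i, ∑ j, (a i j * (((∑ j', a i j') - R) * ((∑ i', a i' j) - C))
        + (C - γ) * (a i j * (((∑ j', a i j') - R) ^ 2 / (∑ j', a i j')))
        + (R - ρ) * (a i j * (((∑ i', a i' j) - C) ^ 2 / (∑ i', a i' j)))))
        = (∑ i, ∑ j, a i j * (((∑ j', a i j') - R) * ((∑ i', a i' j) - C)))
        + (C - γ) * (∑ i, ∑ j, a i j * (((∑ j', a i j') - R) ^ 2 / (∑ j', a i j')))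
        + (R - ρ) * (∑ i, ∑ j, a i j * (((∑ i', a i' j) - C) ^ 2 / (∑ i', a i' j))) := by
      simp only [Finset.sum_add_distrib, Finset.mul_sum]
    rw [hdist] at h0
    exact h0
  -- main identity
  have hmain : (∑ i, ∑ j, a i j * ((∑ j', a i j') - ρ) * ((∑ i', a i' j) - γ))
      = (∑ i, ∑ j, a i j * (((∑ j', a i j') - R) * ((∑ i', a i' j) - C)))
      + (C - γ) * (∑ i, ∑ j, a i j * ((∑ j', a i j') - R))
      + (R - ρ) * (∑ i, ∑ j, a i j * ((∑ i', a i' j) - C))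
      + ((R - ρ) * (C - γ)) * (∑ i, ∑ j, a i j) := by
    have hpt : ∀ i j, a i j * ((∑ j', a i j') - ρ) * ((∑ i', a i' j) - γ)
        = a i j * (((∑ j', a i j') - R) * ((∑ i', a i' j) - C))
        + (C - γ) * (a i j * ((∑ j', a i j') - R))
        + (R - ρ) * (a i j * ((∑ i', a i' j) - C))
        + ((R - ρ) * (C - γ)) * a i j := by
      intro i j
      ring
    calc (∑ i, ∑ j, a i j * ((∑ j', a i j') - ρ) * ((∑ i', a i' j) - γ))
        = ∑ i, ∑ j, (a i j * (((∑ j', a i j') - R) * ((∑ i', a i' j) - C))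
          + (C - γ) * (a i j * ((∑ j', a i j') - R))
          + (R - ρ) * (a i j * ((∑ i', a i' j) - C))
          + ((R - ρ) * (C - γ)) * a i j) :=
          Finset.sum_congr rfl fun i _ => Finset.sum_congr rfl fun j _ => hpt i j
      _ = (∑ i, ∑ j, a i j * (((∑ j', a i j') - R) * ((∑ i', a i' j) - C)))
          + (C - γ) * (∑ i, ∑ j, a i j * ((∑ j', a i j') - R))
          + (R - ρ) * (∑ i, ∑ j, a i j * ((∑ i', a i' j) - C))
          + ((R - ρ) * (C - γ)) * (∑ i, ∑ j, a i j) := by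
          simp only [Finset.sum_add_distrib, Finset.mul_sum]
  rw [ge_iff_le, hmain, hXX, hYY, ← he]
  have m1 : (C - γ) * (∑ i, ∑ j, a i j * (((∑ j', a i j') - R) ^ 2 / (∑ j', a i j')))
      ≤ (C - γ) * (∑ i, ((∑ j, a i j) - R) ^ 2) := mul_le_mul_of_nonneg_left hX2 hCγ
  have m2 : (R - ρ) * (∑ i, ∑ j, a i j * (((∑ i', a i' j) - C) ^ 2 / (∑ i', a i' j)))
      ≤ (R - ρ) * (∑ j, ((∑ i, a i j) - C) ^ 2) := mul_le_mul_of_nonneg_left hY2 hRρ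
  have hfin : e * (R - ρ) * (C - γ) = ((R - ρ) * (C - γ)) * e := by ring
  linarith [hS, m1, m2]
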